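/- The monic Hermite polynomials satisfy, for every j ≥ 0 and n ≥ 0, z^j H_n(z) = Σ_{ν=0}^{j} σ_{j,ν}(n) H_{n+j−2ν}(z), where each σ_{j,ν}(n) is a polynomial in n of degree ν with leading coefficient 2^{−ν} · binom(j,ν) (with the convention H_k = 0 for k < 0). -/

import Mathlib

open Polynomial Finset

/-- The monic Hermite polynomials (weight `e^{-x²}`), via the recurrence
`H_{n+1} = x H_n - (n/2) H_{n-1}`. -/
noncomputable def hermiteM : ℕ → Polynomial ℝ
  | 0 => 1
  | 1 => X
  | (n + 2) => X * hermiteM (n + 1) - C (((n : ℝ) + 1) / 2) * hermiteM n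

/-- The monic Hermite polynomials extended to integer indices by the convention
`H_k = 0` for `k < 0`. -/
noncomputable def hermiteZ : ℤ → Polynomial ℝ :=
  fun k => if 0 ≤ k then hermiteM k.toNat else 0

noncomputable def sig : ℕ → ℕ → Polynomial ℝ
  | 0, 0 => 1
  | 0, _+1 => 0
  | j+1, 0 => sig j 0
  | j+1, ν+1 => sig j (ν+1) + C (1/2) * (X + C ((j:ℝ) - 2*ν)) * sig j ν

lemma sig_zero (j : ℕ) : sig j 0 = 1 := by induction j <;> simp [sig, *]

lemma sig_gt : ∀ j ν : ℕ, j < ν → sig j ν = 0 := by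
  intro j
  induction j with
  | zero => intro ν h; cases ν with
    | zero => omega
    | succ ν => simp [sig]
  | succ j ih => intro ν h; cases ν with
    | zero => omega
    | succ ν =>
      rw [sig, ih (ν+1) (by omega), ih ν (by omega)]
      ring

lemma sig_deg : ∀ j ν : ℕ, (sig j ν).coeff ν = (j.choose ν : ℝ) / 2 ^ ν ∧ (sig j ν).natDegree ≤ ν := by
  intro j
  induction j with
  | zero => intro ν; cases ν with
    | zero => simp [sig]
    | succ ν => simp [sig]
  | succ j ih => intro ν; cases ν with
    | zero => rw [sig_zero]; simp
    | succ ν =>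
      obtain ⟨h1, h2⟩ := ih (ν+1)
      obtain ⟨h3, h4⟩ := ih ν
      constructor
      · rw [sig]
        rw [coeff_add, h1]
        have hX : (C (1/2 : ℝ) * (X + C ((j:ℝ) - 2*ν)) * sig j ν).coeff (ν+1)
            = (1/2 : ℝ) * ((sig j ν).coeff ν + ((j:ℝ) - 2*ν) * (sig j ν).coeff (ν+1)) := by
          rw [mul_assoc, coeff_C_mul, add_mul, coeff_add, coeff_X_mul, coeff_C_mul]
        rw [hX, h3, coeff_eq_zero_of_natDegree_lt (Nat.lt_succ_of_le h4)]
        rw [Nat.choose_succ_succ]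
        push_cast
        ring
      · rw [sig]
        refine le_trans (natDegree_add_le _ _) (max_le h2 ?_)
        refine le_trans (natDegree_mul_le) ?_
        refine le_trans (add_le_add (natDegree_mul_le) h4) ?_
        have : (C (1/2:ℝ)).natDegree = 0 := natDegree_C _
        have hx : (X + C ((j:ℝ) - 2*ν)).natDegree ≤ 1 := (natDegree_X_add_C _).le
        omega

lemma sig_vanish : ∀ j ν : ℕ, ∀ n : ℕ, (n:ℤ) + j < 2*ν → (sig j ν).eval (n:ℝ) = 0 := by
  intro j
  induction j with
  | zero => intro ν n h; cases ν with
    | zero => omega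
    | succ ν => simp [sig]
  | succ j ih => intro ν n h; cases ν with
    | zero => omega
    | succ ν =>
      rw [sig]
      simp only [eval_add, eval_mul, eval_C, eval_X]
      rw [ih (ν+1) n (by omega)]
      rcases eq_or_lt_of_le (show (n:ℤ) + j ≤ 2*ν by omega) with heq | hlt
      · have : (n:ℝ) + ((j:ℝ) - 2*ν) = 0 := by
          have : (n:ℤ) + ((j:ℤ) - 2*ν) = 0 := by omega
          exact_mod_cast congrArg (Int.cast : ℤ → ℝ) this
        rw [this]
        ring
      · rw [ih ν n hlt]
        ring

lemma hZ_nonneg (n : ℕ) : hermiteZ (n : ℤ) = hermiteM n := by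
  simp [hermiteZ]

lemma hZ_rec (k : ℤ) (hk : k ≠ -1) :
    X * hermiteZ k = hermiteZ (k+1) + C ((k:ℝ)/2) * hermiteZ (k-1) := by
  rcases lt_trichotomy k 0 with h | h | h
  · have h2 : k ≤ -2 := by omega
    have : hermiteZ k = 0 := by simp [hermiteZ]; omega
    have e1 : hermiteZ (k+1) = 0 := by simp [hermiteZ]; omega
    have e2 : hermiteZ (k-1) = 0 := by simp [hermiteZ]; omega
    rw [this, e1, e2]; ring
  · subst h
    have e2 : hermiteZ (-1 : ℤ) = 0 := by simp [hermiteZ]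
    norm_num [hermiteZ, e2, hermiteM]
  · obtain ⟨m, rfl⟩ : ∃ m : ℕ, k = (m : ℤ) + 1 := ⟨(k-1).toNat, by omega⟩
    have e0 : hermiteZ ((m:ℤ)+1) = hermiteM (m+1) := by
      rw [show ((m:ℤ)+1) = ((m+1 : ℕ) : ℤ) by push_cast; ring, hZ_nonneg]
    have e1 : hermiteZ ((m:ℤ)+1+1) = hermiteM (m+2) := by
      rw [show ((m:ℤ)+1+1) = ((m+2 : ℕ) : ℤ) by push_cast; ring, hZ_nonneg]
    have e2 : hermiteZ ((m:ℤ)+1-1) = hermiteM m := by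
      rw [show ((m:ℤ)+1-1) = ((m : ℕ) : ℤ) by push_cast; ring, hZ_nonneg]
    rw [e0, e1, e2, show hermiteM (m+2) = X * hermiteM (m+1) - C (((m : ℝ) + 1) / 2) * hermiteM m from rfl]
    push_cast
    ring

lemma main_id : ∀ j n : ℕ,
    X ^ j * hermiteM n
      = ∑ ν ∈ Finset.range (j + 1),
          C ((sig j ν).eval (n : ℝ)) * hermiteZ ((n : ℤ) + (j : ℤ) - 2 * (ν : ℤ)) := by
  intro j
  induction j with
  | zero =>
    intro n
    simp [sig_zero, hZ_nonneg]
  | succ j ih =>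
    intro n
    have step : X ^ (j+1) * hermiteM n = X * (X ^ j * hermiteM n) := by ring
    rw [step, ih n, Finset.mul_sum]
    -- termwise
    have term : ∀ ν ∈ Finset.range (j+1),
        X * (C ((sig j ν).eval (n : ℝ)) * hermiteZ ((n : ℤ) + j - 2 * ν))
        = C ((sig j ν).eval (n : ℝ)) * hermiteZ ((n : ℤ) + j - 2 * ν + 1)
          + C ((sig j ν).eval (n : ℝ) * (((n:ℝ) + j - 2*ν)/2)) * hermiteZ ((n : ℤ) + j - 2 * ν - 1) := by
      intro ν _
      by_cases hneg : (n : ℤ) + j - 2 * ν = -1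
      · have hz : (sig j ν).eval (n:ℝ) = 0 := sig_vanish j ν n (by omega)
        rw [hz]; simp
      · rw [show X * (C ((sig j ν).eval (n : ℝ)) * hermiteZ ((n : ℤ) + j - 2 * ν))
            = C ((sig j ν).eval (n : ℝ)) * (X * hermiteZ ((n : ℤ) + j - 2 * ν)) by ring,
          hZ_rec _ hneg]
        have hc : ((((n : ℤ) + j - 2 * ν) : ℤ) : ℝ) = (n:ℝ) + j - 2*ν := by push_cast; ring
        rw [hc, mul_add, C_mul, ← mul_assoc]
    rw [Finset.sum_congr rfl term, Finset.sum_add_distrib]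
    -- first sum: extend to range (j+2)
    have first : ∑ ν ∈ Finset.range (j+1),
        C ((sig j ν).eval (n : ℝ)) * hermiteZ ((n : ℤ) + j - 2 * ν + 1)
        = ∑ ν ∈ Finset.range (j+2),
        C ((sig j ν).eval (n : ℝ)) * hermiteZ ((n : ℤ) + (j+1:ℕ) - 2 * ν) := by
      symm
      rw [Finset.sum_range_succ, sig_gt j (j+1) (by omega)]
      simp only [eval_zero, map_zero, zero_mul, add_zero]
      refine Finset.sum_congr rfl ?_
      intro ν _
      congr 1
      push_cast
      ring
    -- second sum: shift index
    have second : ∑ ν ∈ Finset.range (j+1),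
        C ((sig j ν).eval (n : ℝ) * (((n:ℝ) + j - 2*ν)/2)) * hermiteZ ((n : ℤ) + j - 2 * ν - 1)
        = ∑ ν ∈ Finset.range (j+2),
          (if ν = 0 then (0 : Polynomial ℝ) else
            C ((sig j (ν-1)).eval (n : ℝ) * (((n:ℝ) + j - 2*(ν-1:ℕ))/2)) * hermiteZ ((n : ℤ) + (j+1:ℕ) - 2 * ν)) := by
      symm
      refine (Finset.sum_range_succ' _ (j+1)).trans ?_
      rw [if_pos rfl, add_zero]
      refine Finset.sum_congr rfl ?_
      intro ν _
      rw [if_neg (Nat.succ_ne_zero ν), Nat.add_sub_cancel]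
      congr 2
      push_cast
      ring
    rw [first, second, ← Finset.sum_add_distrib]
    refine Finset.sum_congr rfl ?_
    intro ν hν
    cases ν with
    | zero =>
      rw [if_pos rfl, add_zero, sig_zero, sig_zero]
    | succ ν =>
      rw [if_neg (Nat.succ_ne_zero _), Nat.add_sub_cancel]
      rw [show sig (j+1) (ν+1) = sig j (ν+1) + C (1/2) * (X + C ((j:ℝ) - 2*ν)) * sig j ν from rfl]
      rw [← add_mul]
      congr 1
      rw [eval_add, eval_mul, eval_mul, eval_C, eval_add, eval_X, eval_C, map_add, C_mul]
      congr 1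
      rw [← C_mul]
      congr 1
      ring

theorem hermite_power_expansion :
    ∃ σ : ℕ → ℕ → Polynomial ℝ,
      (∀ j ν, ν ≤ j →
        (σ j ν).natDegree = ν ∧ (σ j ν).leadingCoeff = (j.choose ν : ℝ) / 2 ^ ν) ∧
      ∀ j n : ℕ,
        X ^ j * hermiteM n
          = ∑ ν ∈ Finset.range (j + 1),
              C ((σ j ν).eval (n : ℝ)) * hermiteZ ((n : ℤ) + (j : ℤ) - 2 * (ν : ℤ)) := by
  refine ⟨sig, ?_, main_id⟩
  intro j ν hν
  obtain ⟨h1, h2⟩ := sig_deg j ν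
  have hne : (sig j ν).coeff ν ≠ 0 := by
    rw [h1]
    have : 0 < j.choose ν := Nat.choose_pos hν
    positivity
  have hdeg : (sig j ν).natDegree = ν :=
    le_antisymm h2 (le_natDegree_of_ne_zero hne)
  exact ⟨hdeg, by rw [leadingCoeff, hdeg, h1]⟩
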